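/- Let Y be a real-valued random variable with cumulative distribution function F(t) = P(Y ≤ t), let τ ∈ (0,1), and let a ∈ ℝ satisfy F(a) = τ. Suppose there exist L > 0 and f̲ > 0 such that |F(a + z) − F(a)| ≥ f̲·|z| for every z with |z| ≤ L. Then for every δ ∈ ℝ, E[ρ_τ(Y − a − δ) − ρ_τ(Y − a)] ≥ c · min{|δ|, δ²}, where c = min{f̲/2, L·f̲/4}. -/

import Mathlib

open MeasureTheory

/-- The check (quantile) loss `ρ_τ(u) = max {τ·u, (τ−1)·u}`. -/
noncomputable def checkLoss (τ u : ℝ) : ℝ := max (τ * u) ((τ - 1) * u)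

lemma checkLoss_eq (τ x : ℝ) : checkLoss τ x = τ * x - min x 0 := by
  unfold checkLoss
  rcases le_total x 0 with h | h
  · rw [max_eq_right (by nlinarith), min_eq_left h]; ring
  · rw [max_eq_left (by nlinarith), min_eq_right h]; ring

lemma integral_lb (L fbar : ℝ) (hL : 0 < L) (hfbar : 0 < fbar)
    (g : ℝ → ℝ) (hg : Monotone g) (hgrow : ∀ s, 0 ≤ s → s ≤ L → fbar * s ≤ g s)
    (d : ℝ) (hd : 0 ≤ d) :
    min (fbar / 2) (L * fbar / 4) * min d (d ^ 2) ≤ ∫ s in (0:ℝ)..d, g s := by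
  have hc0 : 0 < min (fbar / 2) (L * fbar / 4) :=
    lt_min (by positivity) (by positivity)
  have base : ∀ e : ℝ, 0 ≤ e → e ≤ L → fbar * (e ^ 2 / 2) ≤ ∫ s in (0:ℝ)..e, g s := by
    intro e he heL
    have h1 : ∫ s in (0:ℝ)..e, fbar * s ≤ ∫ s in (0:ℝ)..e, g s := by
      apply intervalIntegral.integral_mono_on he
        ((continuous_const.mul continuous_id).intervalIntegrable _ _)
        hg.intervalIntegrable
      intro s hs
      exact hgrow s hs.1 (hs.2.trans heL)
    have h2 : ∫ s in (0:ℝ)..e, fbar * s = fbar * (e ^ 2 / 2) := by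
      rw [intervalIntegral.integral_const_mul, integral_id]; ring
    linarith
  rcases le_or_gt d L with h | h
  · have h1 := base d hd h
    have h3 : min d (d ^ 2) ≤ d ^ 2 := min_le_right _ _
    have h4 : min (fbar / 2) (L * fbar / 4) ≤ fbar / 2 := min_le_left _ _
    have hmin0 : 0 ≤ min d (d ^ 2) := le_min hd (sq_nonneg d)
    nlinarith [mul_le_mul h4 h3 hmin0 (by positivity : (0:ℝ) ≤ fbar / 2)]
  · have hiL : IntervalIntegrable g volume 0 L := hg.intervalIntegrable
    have hiLd : IntervalIntegrable g volume L d := hg.intervalIntegrable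
    have hsplit : (∫ s in (0:ℝ)..L, g s) + ∫ s in L..d, g s = ∫ s in (0:ℝ)..d, g s :=
      intervalIntegral.integral_add_adjacent_intervals hiL hiLd
    have b1 := base L hL.le le_rfl
    have b2 : (d - L) * (fbar * L) ≤ ∫ s in L..d, g s := by
      have hmono : ∫ s in L..d, (fbar * L) ≤ ∫ s in L..d, g s := by
        apply intervalIntegral.integral_mono_on h.le intervalIntegrable_const hiLd
        intro s hs
        exact (hgrow L hL.le le_rfl).trans (hg hs.1)
      rw [intervalIntegral.integral_const, smul_eq_mul] at hmono; nlinarith [hmono]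
    have h3 : min d (d ^ 2) ≤ d := min_le_left _ _
    have h4 : min (fbar / 2) (L * fbar / 4) ≤ L * fbar / 4 := min_le_right _ _
    have hmin0 : 0 ≤ min d (d ^ 2) := le_min hd (sq_nonneg d)
    nlinarith [mul_le_mul h4 h3 hmin0 (by positivity : (0:ℝ) ≤ L * fbar / 4),
      mul_pos hfbar hL, mul_le_mul_of_nonneg_left h.le (mul_pos hfbar hL).le]

lemma swap_lemma {Ω : Type*} [MeasurableSpace Ω] (μ : Measure Ω) [IsProbabilityMeasure μ]
    (Y : Ω → ℝ) (hY : Measurable Y) (a δ : ℝ) (hδ : 0 ≤ δ) :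
    ∫ ω, (min (Y ω - a) 0 - min (Y ω - a - δ) 0) ∂μ
      = ∫ s in (0:ℝ)..δ, (μ {ω | Y ω ≤ a + s}).toReal := by
  set f : Ω → ℝ → ℝ := fun ω s => if Y ω - a ≤ s then (1:ℝ) else 0 with hf
  have key : ∀ ω, min (Y ω - a) 0 - min (Y ω - a - δ) 0
      = ∫ s in Set.Ioc (0:ℝ) δ, f ω s := by
    intro ω
    set u := Y ω - a with hu
    have hind : f ω = (Set.Ici u).indicator (fun _ => (1:ℝ)) := by
      funext s
      simp only [hf, Set.indicator_apply, Set.mem_Ici]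
      rfl
    rw [hind, setIntegral_indicator measurableSet_Ici]
    rcases le_or_gt u 0 with h | h
    · have hsub : Set.Ioc (0:ℝ) δ ⊆ Set.Ici u := fun s hs => le_of_lt (h.trans_lt hs.1)
      rw [Set.inter_eq_self_of_subset_left hsub]
      rw [setIntegral_const, measureReal_def, Real.volume_Ioc, smul_eq_mul, mul_one,
        ENNReal.toReal_ofReal (by linarith : (0:ℝ) ≤ δ - 0)]
      rw [min_eq_left h, min_eq_left (by linarith)]
      ring
    · have hset : Set.Ioc (0:ℝ) δ ∩ Set.Ici u = Set.Icc u δ := by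
        ext s
        simp only [Set.mem_inter_iff, Set.mem_Ici, Set.mem_Ioc, Set.mem_Icc]
        exact ⟨fun ⟨h2, h1⟩ => ⟨h1, h2.2⟩, fun ⟨h1, h2⟩ => ⟨⟨h.trans_le h1, h2⟩, h1⟩⟩
      rw [hset, setIntegral_const, measureReal_def, smul_eq_mul, mul_one, Real.volume_Icc]
      rcases le_or_gt u δ with h2 | h2
      · rw [ENNReal.toReal_ofReal (by linarith)]
        rw [min_eq_right h.le, min_eq_left (by linarith)]
        ring
      · rw [show ENNReal.ofReal (δ - u) = 0 from by
          simp [ENNReal.ofReal_eq_zero]; linarith]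
        rw [min_eq_right h.le, min_eq_right (by linarith)]
        simp
  have hmeas : Measurable (Function.uncurry f) := by
    apply Measurable.ite _ measurable_const measurable_const
    exact measurableSet_le ((hY.comp measurable_fst).sub measurable_const) measurable_snd
  haveI : IsFiniteMeasure ((volume : Measure ℝ).restrict (Set.Ioc (0:ℝ) δ)) := by
    constructor
    rw [Measure.restrict_apply_univ, Real.volume_Ioc]
    exact ENNReal.ofReal_lt_top
  have hint : Integrable (Function.uncurry f)
      (μ.prod ((volume : Measure ℝ).restrict (Set.Ioc (0:ℝ) δ))) := by
    apply Integrable.mono' (integrable_const (1:ℝ)) hmeas.aestronglyMeasurable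
    filter_upwards with p
    rw [show Function.uncurry f p = if Y p.1 - a ≤ p.2 then (1:ℝ) else 0 from rfl]
    split <;> simp
  have inner : ∀ s : ℝ, ∫ ω, f ω s ∂μ = (μ {ω | Y ω ≤ a + s}).toReal := by
    intro s
    have : (fun ω => f ω s) = Set.indicator {ω | Y ω ≤ a + s} (fun _ => (1:ℝ)) := by
      funext ω
      simp only [hf, Set.indicator_apply, Set.mem_setOf_eq, sub_le_iff_le_add']
    rw [this]
    exact integral_indicator_one (μ := μ)
      (measurableSet_le hY (measurable_const : Measurable fun _ : Ω => a + s))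
  calc ∫ ω, (min (Y ω - a) 0 - min (Y ω - a - δ) 0) ∂μ
      = ∫ ω, (∫ s in Set.Ioc (0:ℝ) δ, f ω s) ∂μ := integral_congr_ae (ae_of_all _ key)
    _ = ∫ s in Set.Ioc (0:ℝ) δ, (∫ ω, f ω s ∂μ) := integral_integral_swap hint
    _ = ∫ s in Set.Ioc (0:ℝ) δ, (μ {ω | Y ω ≤ a + s}).toReal := by simp_rw [inner]
    _ = ∫ s in (0:ℝ)..δ, (μ {ω | Y ω ≤ a + s}).toReal :=
        (intervalIntegral.integral_of_le hδ).symm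

/-- Let `Y` be a real random variable with CDF `F`, `τ ∈ (0,1)`, and `a` a `τ`-quantile
(`F a = τ`).  If `|F(a+z) − F(a)| ≥ f̲·|z|` for all `|z| ≤ L` (with `L, f̲ > 0`), then for
every `δ`, `E[ρ_τ(Y − a − δ) − ρ_τ(Y − a)] ≥ c · min{|δ|, δ²}` with
`c = min{f̲/2, L·f̲/4}`. -/
theorem expectation_checkLoss_increment_lower_bound
    {Ω : Type*} [MeasurableSpace Ω] (μ : Measure Ω) [IsProbabilityMeasure μ]
    (Y : Ω → ℝ) (hY : Measurable Y)
    (F : ℝ → ℝ) (hF : ∀ t, F t = (μ {ω | Y ω ≤ t}).toReal)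
    (τ : ℝ) (hτ : τ ∈ Set.Ioo (0 : ℝ) 1) (a : ℝ) (ha : F a = τ)
    (L fbar : ℝ) (hL : 0 < L) (hfbar : 0 < fbar)
    (hgrowth : ∀ z : ℝ, |z| ≤ L → fbar * |z| ≤ |F (a + z) - F a|) (δ : ℝ) :
    min (fbar / 2) (L * fbar / 4) * min |δ| (δ ^ 2) ≤
      ∫ ω, (checkLoss τ (Y ω - a - δ) - checkLoss τ (Y ω - a)) ∂μ := by
  have hFmono : Monotone F := by
    intro s t hst
    rw [hF s, hF t]
    exact ENNReal.toReal_mono (measure_ne_top μ _)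
      (measure_mono fun ω hω => le_trans hω hst)
  have hpt : ∀ ω, checkLoss τ (Y ω - a - δ) - checkLoss τ (Y ω - a)
      = -(τ * δ) + (min (Y ω - a) 0 - min (Y ω - a - δ) 0) := by
    intro ω
    rw [checkLoss_eq, checkLoss_eq]; ring
  have hmeas : Measurable (fun ω => min (Y ω - a) 0 - min (Y ω - a - δ) 0) :=
    ((hY.sub measurable_const).min measurable_const).sub
      (((hY.sub measurable_const).sub measurable_const).min measurable_const)
  have hint : Integrable (fun ω => min (Y ω - a) 0 - min (Y ω - a - δ) 0) μ := by
    apply Integrable.mono' (integrable_const |δ|) hmeas.aestronglyMeasurable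
    filter_upwards with ω
    rw [Real.norm_eq_abs, abs_le]
    rcases le_total (Y ω - a) 0 with h1 | h1 <;>
      rcases le_total (Y ω - a - δ) 0 with h2 | h2
    · rw [min_eq_left h1, min_eq_left h2]
      constructor <;> linarith [neg_abs_le δ, le_abs_self δ]
    · rw [min_eq_left h1, min_eq_right h2]
      constructor <;> linarith [neg_abs_le δ, le_abs_self δ]
    · rw [min_eq_right h1, min_eq_left h2]
      constructor <;> linarith [neg_abs_le δ, le_abs_self δ]
    · rw [min_eq_right h1, min_eq_right h2]
      constructor <;> linarith [neg_abs_le δ, le_abs_self δ]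
  have hgmono : Monotone (fun s => F (a + s) - τ) := fun x y hxy => by
    have := hFmono (show a + x ≤ a + y by linarith)
    simp only; linarith
  have hEq : ∫ ω, (checkLoss τ (Y ω - a - δ) - checkLoss τ (Y ω - a)) ∂μ
      = ∫ s in (0:ℝ)..δ, (F (a + s) - τ) := by
    have e2 : ∫ ω, (min (Y ω - a) 0 - min (Y ω - a - δ) 0) ∂μ
        = ∫ s in (0:ℝ)..δ, F (a + s) := by
      rcases le_or_gt 0 δ with hδ0 | hδ0
      · rw [swap_lemma μ Y hY a δ hδ0]
        apply intervalIntegral.integral_congr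
        intro s _
        exact (hF (a + s)).symm
      · have flip : ∀ ω, min (Y ω - a) 0 - min (Y ω - a - δ) 0
            = -(min (Y ω - (a + δ)) 0 - min (Y ω - (a + δ) - (-δ)) 0) := by
          intro ω
          rw [show Y ω - (a + δ) - (-δ) = Y ω - a by ring,
            show Y ω - (a + δ) = Y ω - a - δ by ring]
          ring
        rw [integral_congr_ae (ae_of_all _ flip), integral_neg,
          swap_lemma μ Y hY (a + δ) (-δ) (by linarith)]
        have e3 : ∀ s : ℝ, (μ {ω | Y ω ≤ a + δ + s}).toReal = F (a + (δ + s)) := by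
          intro s
          rw [hF]; ring_nf
        have e4 : ∫ s in (0:ℝ)..(-δ), (μ {ω | Y ω ≤ a + δ + s}).toReal
            = ∫ s in (0:ℝ)..(-δ), F (a + (δ + s)) :=
          intervalIntegral.integral_congr fun s _ => e3 s
        rw [e4, intervalIntegral.integral_comp_add_left (fun t => F (a + t)) δ]
        norm_num
        rw [intervalIntegral.integral_symm (a + δ) a]
    calc ∫ ω, (checkLoss τ (Y ω - a - δ) - checkLoss τ (Y ω - a)) ∂μ
        = ∫ ω, (-(τ * δ) + (min (Y ω - a) 0 - min (Y ω - a - δ) 0)) ∂μ :=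
          integral_congr_ae (ae_of_all _ hpt)
      _ = -(τ * δ) + ∫ ω, (min (Y ω - a) 0 - min (Y ω - a - δ) 0) ∂μ := by
          rw [integral_add (integrable_const _) hint, integral_const]
          simp
      _ = -(τ * δ) + ∫ s in (0:ℝ)..δ, F (a + s) := by rw [e2]
      _ = ∫ s in (0:ℝ)..δ, (F (a + s) - τ) := by
          have hFa : Monotone (fun s => F (a + s)) := fun x y hxy =>
            hFmono (by linarith : a + x ≤ a + y)
          rw [intervalIntegral.integral_sub hFa.intervalIntegrable
            intervalIntegrable_const, intervalIntegral.integral_const, smul_eq_mul]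
          ring
  rw [hEq]
  have hgs : ∀ s, 0 ≤ s → s ≤ L → fbar * s ≤ F (a + s) - τ := by
    intro s h0 hsL
    have hg := hgrowth s (by rwa [abs_of_nonneg h0])
    rw [abs_of_nonneg h0] at hg
    have hnn : 0 ≤ F (a + s) - F a := sub_nonneg.2 (hFmono (by linarith))
    rw [abs_of_nonneg hnn] at hg
    rw [← ha]
    exact hg
  rcases le_or_gt 0 δ with h | h
  · have hb := integral_lb L fbar hL hfbar (fun s => F (a + s) - τ) hgmono hgs δ h
    rwa [abs_of_nonneg h]
  · have hneg : ∀ s, 0 ≤ s → s ≤ L → fbar * s ≤ -(F (a + -s) - τ) := by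
      intro s h0 hsL
      have hg := hgrowth (-s) (by rwa [abs_neg, abs_of_nonneg h0])
      rw [abs_neg, abs_of_nonneg h0] at hg
      have hnp : F (a + -s) - F a ≤ 0 := sub_nonpos.2 (hFmono (by linarith))
      rw [abs_of_nonpos hnp] at hg
      rw [← ha] at *
      linarith
    have hmono2 : Monotone (fun s => -(F (a + -s) - τ)) := fun x y hxy => by
      have := hFmono (show a + -y ≤ a + -x by linarith)
      simp only
      linarith
    have hb := integral_lb L fbar hL hfbar (fun s => -(F (a + -s) - τ)) hmono2 hneg
      (-δ) (by linarith)
    have hflip : (∫ x in (0:ℝ)..(-δ), -(F (a + -x) - τ))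
        = ∫ s in (0:ℝ)..δ, (F (a + s) - τ) := by
      rw [intervalIntegral.integral_neg,
        intervalIntegral.integral_comp_neg (fun t => F (a + t) - τ)]
      rw [intervalIntegral.integral_symm]
      norm_num
    rw [hflip] at hb
    rwa [abs_of_neg h, show δ ^ 2 = (-δ) ^ 2 by ring]
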